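/- arXiv:1307.8439 — 7 statements merged into one kernel-verified Lean document; each statement's English description precedes it below -/
import Mathlib

section
/- Let k ≥ 1 and let E_1, ..., E_k be Lebesgue measurable subsets of ℝ with positive finite measure. Let α, β > 0 with |E_i| ≥ α + β for each i. Define the truncation E_i(α,β) = E_i ∩ [a_i, b_i] where a_i is the minimum real number with |E_i ∩ (-∞, a_i]| = α and b_i is the maximum real number with |E_i ∩ [b_i, ∞)| = β. If ⋂_{i=1}^k E_i(α,β) ≠ ∅, then |⋂_{i=1}^k E_i| ≤ α + β + |⋂_{i=1}^k E_i(α,β)|. -/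
open MeasureTheory Set

/-- Truncation inequality: for measurable sets `E i` of positive finite measure with
`|E i| ≥ α + β`, truncating each set by removing measure `α` from the left and `β` from
the right (via the minimal `a i` and maximal `b i`), if the truncations have a common
point then `|⋂ E i| ≤ α + β + |⋂ E i (α,β)|`. -/
theorem stmt0 (k : ℕ) (hk : 1 ≤ k) (E : Fin k → Set ℝ)
    (hmeas : ∀ i, MeasurableSet (E i))
    (hpos : ∀ i, 0 < volume (E i)) (hfin : ∀ i, volume (E i) < ⊤)
    (α β : ℝ) (hα : 0 < α) (hβ : 0 < β)
    (hge : ∀ i, ENNReal.ofReal (α + β) ≤ volume (E i))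
    (a b : Fin k → ℝ)
    (ha : ∀ i, IsLeast {t : ℝ | volume (E i ∩ Iic t) = ENNReal.ofReal α} (a i))
    (hb : ∀ i, IsGreatest {t : ℝ | volume (E i ∩ Ici t) = ENNReal.ofReal β} (b i))
    (hne : (⋂ i, E i ∩ Icc (a i) (b i)).Nonempty) :
    volume (⋂ i, E i) ≤
      ENNReal.ofReal (α + β) + volume (⋂ i, E i ∩ Icc (a i) (b i)) := by
  haveI : Nonempty (Fin k) := ⟨⟨0, hk⟩⟩
  obtain ⟨j, hj⟩ := Finite.exists_max a
  obtain ⟨l, hl⟩ := Finite.exists_min b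
  have hcover : (⋂ i, E i) ⊆
      ((⋂ i, E i) ∩ Iic (a j)) ∪ (((⋂ i, E i) ∩ Icc (a j) (b l)) ∪
        ((⋂ i, E i) ∩ Ici (b l))) := by
    intro x hx
    rcases le_total x (a j) with h1 | h1
    · exact Or.inl ⟨hx, h1⟩
    rcases le_total x (b l) with h2 | h2
    · exact Or.inr (Or.inl ⟨hx, h1, h2⟩)
    · exact Or.inr (Or.inr ⟨hx, h2⟩)
  calc volume (⋂ i, E i)
      ≤ volume (((⋂ i, E i) ∩ Iic (a j)) ∪ (((⋂ i, E i) ∩ Icc (a j) (b l)) ∪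
        ((⋂ i, E i) ∩ Ici (b l)))) := measure_mono hcover
    _ ≤ volume ((⋂ i, E i) ∩ Iic (a j)) + (volume ((⋂ i, E i) ∩ Icc (a j) (b l))
        + volume ((⋂ i, E i) ∩ Ici (b l))) :=
        le_trans (measure_union_le _ _) (by gcongr; exact measure_union_le _ _)
    _ ≤ ENNReal.ofReal α + (volume (⋂ i, E i ∩ Icc (a i) (b i)) + ENNReal.ofReal β) := by
        have h1 : volume ((⋂ i, E i) ∩ Iic (a j)) ≤ ENNReal.ofReal α :=
          calc volume ((⋂ i, E i) ∩ Iic (a j)) ≤ volume (E j ∩ Iic (a j)) :=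
                measure_mono (inter_subset_inter_left _ (iInter_subset _ j))
            _ = ENNReal.ofReal α := (ha j).1
        have h3 : volume ((⋂ i, E i) ∩ Ici (b l)) ≤ ENNReal.ofReal β :=
          calc volume ((⋂ i, E i) ∩ Ici (b l)) ≤ volume (E l ∩ Ici (b l)) :=
                measure_mono (inter_subset_inter_left _ (iInter_subset _ l))
            _ = ENNReal.ofReal β := (hb l).1
        refine add_le_add h1 (add_le_add ?_ h3)
        refine measure_mono fun x hx => ?_
        obtain ⟨hx0, hx1, hx2⟩ := hx
        exact mem_iInter.2 fun i => ⟨mem_iInter.1 hx0 i,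
          le_trans (hj i) hx1, le_trans hx2 (hl i)⟩
    _ = ENNReal.ofReal (α + β) + volume (⋂ i, E i ∩ Icc (a i) (b i)) := by
        rw [ENNReal.ofReal_add hα.le hβ.le]; ring
end

section
/- Let k ≥ 1 and let E_1, ..., E_k be closed bounded intervals in ℝ, each of length at least α + β, where α, β > 0. If ⋂_{i=1}^k E_i(α,β) ≠ ∅, then |⋂_{i=1}^k E_i| = α + β + |⋂_{i=1}^k E_i(α,β)|, where E_i(α,β) denotes the truncation of E_i obtained by removing the leftmost portion of measure α and the rightmost portion of measure β. -/
open MeasureTheory Set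

/-- Equality case of the truncation inequality for closed bounded intervals:
if `E i = [c i, d i]` has length at least `α + β` and the truncations
`[c i + α, d i - β]` have a common point, then
`|⋂ E i| = α + β + |⋂ E i (α,β)|`. -/
theorem stmt1 (k : ℕ) (hk : 1 ≤ k) (c d : Fin k → ℝ) (α β : ℝ)
    (hα : 0 < α) (hβ : 0 < β)
    (hlen : ∀ i, α + β ≤ d i - c i)
    (hne : (⋂ i, Icc (c i + α) (d i - β)).Nonempty) :
    volume (⋂ i, Icc (c i) (d i)) =
      ENNReal.ofReal (α + β) + volume (⋂ i, Icc (c i + α) (d i - β)) := by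
  haveI : NeZero k := ⟨by omega⟩
  have hfin : (Finset.univ : Finset (Fin k)).Nonempty := Finset.univ_nonempty
  set C := Finset.univ.sup' hfin c with hCdef
  set D := Finset.univ.inf' hfin d with hDdef
  have h1 : (⋂ i, Icc (c i) (d i)) = Icc C D := by
    ext x
    simp only [mem_iInter, mem_Icc, forall_and]
    constructor
    · rintro ⟨h1, h2⟩
      exact ⟨Finset.sup'_le _ _ fun i _ => h1 i, Finset.le_inf' _ _ fun i _ => h2 i⟩
    · rintro ⟨h1, h2⟩
      exact ⟨fun i => le_trans (Finset.le_sup' c (Finset.mem_univ i)) h1,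
             fun i => le_trans h2 (Finset.inf'_le d (Finset.mem_univ i))⟩
  have h2 : (⋂ i, Icc (c i + α) (d i - β)) = Icc (C + α) (D - β) := by
    ext x
    simp only [mem_iInter, mem_Icc, forall_and]
    constructor
    · rintro ⟨h1, h2⟩
      constructor
      · rw [← le_sub_iff_add_le]
        exact Finset.sup'_le _ _ fun i _ => by linarith [h1 i]
      · rw [le_sub_iff_add_le]
        exact Finset.le_inf' _ _ fun i _ => by linarith [h2 i]
    · rintro ⟨h1, h2⟩
      exact ⟨fun i => by linarith [Finset.le_sup' c (Finset.mem_univ i)],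
             fun i => by linarith [Finset.inf'_le d (Finset.mem_univ i)]⟩
  have hCD : C + α ≤ D - β := by
    obtain ⟨x, hx⟩ := hne
    rw [h2, mem_Icc] at hx
    linarith [hx.1, hx.2]
  rw [h1, h2, Real.volume_Icc, Real.volume_Icc,
      ← ENNReal.ofReal_add (by positivity) (by linarith)]
  congr 1
  ring
end

section
/- Let 0 ≤ α, β < ∞ and let {I_k} be a finite collection of closed bounded intervals in ℝ with |I_k| ≥ α + β for all k. Suppose ⋂_k I_k(α,β) ≠ ∅, and J is a closed interval with |J| ≥ α + β such that J(α,β) ⊇ ⋂_k I_k(α,β). Then J ⊇ ⋂_k I_k. -/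
open MeasureTheory Set

/-- If the truncations `I_k(α,β) = [c k + α, d k - β]` of a finite family of closed bounded
intervals have a common point, and the truncation `J(α,β) = [p+α, q-β]` of a closed interval
`J = [p,q]` contains `⋂ I_k(α,β)`, then `J ⊇ ⋂ I_k`. -/
theorem stmt2 {ι : Type*} [Fintype ι] [Nonempty ι] (α β : ℝ)
    (hα : 0 ≤ α) (hβ : 0 ≤ β)
    (c d : ι → ℝ) (hlen : ∀ k, α + β ≤ d k - c k)
    (p q : ℝ) (hJ : α + β ≤ q - p)
    (hne : (⋂ k, Icc (c k + α) (d k - β)).Nonempty)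
    (hsub : (⋂ k, Icc (c k + α) (d k - β)) ⊆ Icc (p + α) (q - β)) :
    (⋂ k, Icc (c k) (d k)) ⊆ Icc p q := by
  obtain ⟨x0, hx0⟩ := hne
  simp only [mem_iInter, mem_Icc] at hx0
  obtain ⟨k1, hk1⟩ := Finite.exists_max c
  obtain ⟨k2, hk2⟩ := Finite.exists_min d
  have h1 : c k1 + α ∈ ⋂ k, Icc (c k + α) (d k - β) := by
    simp only [mem_iInter, mem_Icc]
    exact fun k => ⟨by linarith [hk1 k], le_trans (hx0 k1).1 (hx0 k).2⟩
  have h2 : d k2 - β ∈ ⋂ k, Icc (c k + α) (d k - β) := by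
    simp only [mem_iInter, mem_Icc]
    exact fun k => ⟨le_trans (hx0 k).1 (hx0 k2).2, by linarith [hk2 k]⟩
  have hp : p ≤ c k1 := by have := (hsub h1).1; linarith
  have hq : d k2 ≤ q := by have := (hsub h2).2; linarith
  intro x hx
  simp only [mem_iInter, mem_Icc] at hx
  exact ⟨le_trans hp (hx k1).1, le_trans (hx k2).2 hq⟩
end

section
/- Let (L_j : 1 ≤ j ≤ n) be a nondegenerate family of surjective linear maps ℝ^m → ℝ, and let (E_1, ..., E_n) be a strictly admissible n-tuple of measurable subsets of ℝ. Then there exists ε > 0 such that any n-tuple (F_1, ..., F_n) of measurable subsets of ℝ satisfying ||E_j| − |F_j|| < ε for all j is also strictly admissible. -/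
open MeasureTheory Set

/-- The closed interval centered at `0` with the same measure as `E`. -/
def symInt (E : Set ℝ) : Set ℝ :=
  Set.Icc (-(MeasureTheory.volume E).toReal / 2) ((MeasureTheory.volume E).toReal / 2)

/-- The strip in `ℝ^m` associated to `L j` and the symmetrized set `(E j)^*`. -/
def strip {m n : ℕ} (L : Fin n → ((Fin m → ℝ) →ₗ[ℝ] ℝ)) (E : Fin n → Set ℝ) (j : Fin n) :
    Set (Fin m → ℝ) :=
  {x | L j x ∈ symInt (E j)}

/-- Strict admissibility: each set is measurable with positive finite measure and no strip
`S_i^⋆` contains `⋂_{j ≠ i} S_j^⋆`. -/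
def StrictAdm {m n : ℕ} (L : Fin n → ((Fin m → ℝ) →ₗ[ℝ] ℝ)) (E : Fin n → Set ℝ) : Prop :=
  (∀ j, MeasurableSet (E j) ∧ 0 < volume (E j) ∧ volume (E j) < ⊤) ∧
    ∀ i, ¬ ((⋂ j ∈ ({i}ᶜ : Set (Fin n)), strip L E j) ⊆ strip L E i)

lemma mem_strip_iff {m n : ℕ} (L : Fin n → ((Fin m → ℝ) →ₗ[ℝ] ℝ)) (E : Fin n → Set ℝ)
    (j : Fin n) (x : Fin m → ℝ) :
    x ∈ strip L E j ↔ |L j x| ≤ (volume (E j)).toReal / 2 := by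
  simp [strip, symInt, abs_le, neg_div, Set.mem_Icc]

/-- Stability of strict admissibility under small perturbations of the measures. -/
theorem stmt5 (m n : ℕ) (L : Fin n → ((Fin m → ℝ) →ₗ[ℝ] ℝ))
    (hsurj : ∀ j, Function.Surjective (L j))
    (hnd : ∀ S : Finset (Fin n), S.card = m →
      Function.Bijective (fun (x : Fin m → ℝ) (j : S) => L j.1 x))
    (E : Fin n → Set ℝ) (hE : StrictAdm L E) :
    ∃ ε > (0 : ℝ), ∀ F : Fin n → Set ℝ, (∀ j, MeasurableSet (F j)) →
      (∀ j, |(volume (E j)).toReal - (volume (F j)).toReal| < ε) → StrictAdm L F := by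
  classical
  obtain ⟨hEmeas, hEni⟩ := hE
  rcases Nat.eq_zero_or_pos n with hn | hn
  · subst hn
    exact ⟨1, one_pos, fun F hF hclose => ⟨fun j => j.elim0, fun i => i.elim0⟩⟩
  haveI : Nonempty (Fin n) := ⟨⟨0, hn⟩⟩
  set r : Fin n → ℝ := fun j => (volume (E j)).toReal with hrdef
  have hr : ∀ j, 0 < r j := fun j =>
    ENNReal.toReal_pos (hEmeas j).2.1.ne' (hEmeas j).2.2.ne
  -- witnesses
  have hw : ∀ i, ∃ x : Fin m → ℝ, (∀ j, j ≠ i → |L j x| ≤ r j / 2) ∧ r i / 2 < |L i x| := by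
    intro i
    obtain ⟨x, hx1, hx2⟩ := Set.not_subset.mp (hEni i)
    refine ⟨x, ?_, ?_⟩
    · intro j hj
      have := Set.mem_iInter₂.mp hx1 j (by simpa using hj)
      exact (mem_strip_iff L E j x).mp this
    · rw [mem_strip_iff] at hx2
      exact lt_of_not_ge hx2
  choose x hx1 hx2 using hw
  set c : Fin n → ℝ := fun i => |L i (x i)| with hcdef
  have hc0 : ∀ i, 0 ≤ c i := fun i => abs_nonneg _
  have hδ : ∀ i, 0 < c i - r i / 2 := fun i => sub_pos.mpr (hx2 i)
  set ρ : ℝ := Finset.univ.inf' Finset.univ_nonempty r with hρdef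
  have hρpos : 0 < ρ := by
    rw [hρdef, Finset.lt_inf'_iff]
    exact fun j _ => hr j
  have hρle : ∀ j, ρ ≤ r j := fun j => Finset.inf'_le _ (Finset.mem_univ j)
  set K : Fin n → ℝ := fun i => (c i - r i / 2) / (c i / ρ + 1 / 2) with hKdef
  have hD : ∀ i, 0 < c i / ρ + 1 / 2 := fun i => add_pos_of_nonneg_of_pos (div_nonneg (hc0 i) hρpos.le) (by norm_num)
  have hK : ∀ i, 0 < K i := fun i => div_pos (hδ i) (hD i)
  set εK : ℝ := Finset.univ.inf' Finset.univ_nonempty K with hεKdef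
  have hεKpos : 0 < εK := by
    rw [hεKdef, Finset.lt_inf'_iff]
    exact fun j _ => hK j
  have hεKle : ∀ i, εK ≤ K i := fun i => Finset.inf'_le _ (Finset.mem_univ i)
  refine ⟨min (ρ / 2) (εK / 2), lt_min (by positivity) (by positivity), fun F hF hclose => ?_⟩
  set ε : ℝ := min (ρ / 2) (εK / 2) with hεdef
  have hεpos : 0 < ε := lt_min (by positivity) (by positivity)
  have hερ : ε < ρ := lt_of_le_of_lt (min_le_left _ _) (by linarith)
  have hεK : ∀ i, ε < K i := fun i =>
    lt_of_le_of_lt (min_le_right _ _) (lt_of_lt_of_le (by linarith [hεKpos]) (hεKle i))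
  set s : Fin n → ℝ := fun j => (volume (F j)).toReal with hsdef
  have hs : ∀ j, r j - ε < s j ∧ s j < r j + ε := by
    intro j
    have := hclose j
    rw [abs_sub_lt_iff] at this
    constructor <;> linarith [this.1, this.2]
  have hspos : ∀ j, 0 < s j := fun j => by
    have := (hs j).1
    have := hρle j
    linarith
  constructor
  · intro j
    have := ENNReal.toReal_pos_iff.mp (hspos j)
    exact ⟨hF j, this.1, this.2⟩
  · intro i hsub
    set t : ℝ := 1 - ε / ρ with htdef
    have hεdρ : 0 < ε / ρ := div_pos hεpos hρpos
    have htpos : 0 < t := by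
      have h : ε / ρ < 1 := (div_lt_one hρpos).mpr hερ
      rw [htdef]; linarith
    have hmul : ε / ρ * ρ = ε := div_mul_cancel₀ _ hρpos.ne'
    have habs : ∀ j, |L j (t • x i)| = t * |L j (x i)| := by
      intro j
      rw [_root_.map_smul, smul_eq_mul, abs_mul, abs_of_pos htpos]
    have hy : t • x i ∈ ⋂ j ∈ ({i}ᶜ : Set (Fin n)), strip L F j := by
      refine Set.mem_iInter₂.mpr fun j hj => ?_
      have hji : j ≠ i := by simpa using hj
      rw [mem_strip_iff, habs]
      have h1 : |L j (x i)| ≤ r j / 2 := hx1 i j hji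
      have h2 : r j - ε < s j := (hs j).1
      have h3 : ρ ≤ r j := hρle j
      -- t * |L j (x i)| ≤ t * (r j / 2) ≤ (r j - ε)/2 < s j / 2
      nlinarith [mul_le_mul_of_nonneg_left h1 htpos.le, hεdρ,
        mul_le_mul_of_nonneg_left h3 hεdρ.le, hmul]
    have hcon := hsub hy
    rw [mem_strip_iff, habs] at hcon
    have hKi := hεK i
    have h4 : ε * (c i / ρ + 1 / 2) < c i - r i / 2 := (lt_div_iff₀ (hD i)).mp hKi
    have h5 : s i < r i + ε := (hs i).2
    have hcρ : ε / ρ * c i = ε * (c i / ρ) := by ring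
    nlinarith [hcon, h4, h5, hc0 i]
end

section
/- Let E_1, E_2, E_3 ⊂ ℝ be measurable with finite measure, and suppose |E_3| > |E_1| + |E_2| and E_1, E_2 are bounded intervals. Let A ⊂ ℝ be any measurable set with |A| = |E_3| − |E_1| − |E_2|, disjoint from the sumset E_1 + E_2, and set E_3' = (E_1 + E_2) ∪ A. Then ∫∫ 1_{E_1}(x) 1_{E_2}(y) 1_{E_3'}(x+y) dx dy = ∫∫ 1_{E_1^*}(x) 1_{E_2^*}(y) 1_{(E_3')^*}(x+y) dx dy. -/
open MeasureTheory Set Pointwise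

/-- Failure of uniqueness without admissibility: if `E₁, E₂` are bounded intervals,
`|E₃| > |E₁| + |E₂|`, and `E₃' = (E₁ + E₂) ∪ A` for an arbitrary measurable set `A`
disjoint from the sumset with `|A| = |E₃| - |E₁| - |E₂|`, then equality holds in the
Riesz–Sobolev inequality for `(E₁, E₂, E₃')`. -/
theorem stmt9 (a1 b1 a2 b2 : ℝ) (h1 : a1 ≤ b1) (h2 : a2 ≤ b2)
    (E3 A : Set ℝ) (hE3m : MeasurableSet E3) (hE3fin : volume E3 < ⊤)
    (hbig : volume (Icc a1 b1) + volume (Icc a2 b2) < volume E3)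
    (hAm : MeasurableSet A)
    (hAdisj : Disjoint A (Icc a1 b1 + Icc a2 b2))
    (hAvol : volume A = volume E3 - volume (Icc a1 b1) - volume (Icc a2 b2)) :
    volume {p : ℝ × ℝ | p.1 ∈ Icc a1 b1 ∧ p.2 ∈ Icc a2 b2 ∧
        p.1 + p.2 ∈ (Icc a1 b1 + Icc a2 b2) ∪ A} =
      volume {p : ℝ × ℝ | p.1 ∈ symInt (Icc a1 b1) ∧ p.2 ∈ symInt (Icc a2 b2) ∧
        p.1 + p.2 ∈ symInt ((Icc a1 b1 + Icc a2 b2) ∪ A)} := by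
  set c1 : ℝ := b1 - a1 with hc1
  set c2 : ℝ := b2 - a2 with hc2
  have hc1n : 0 ≤ c1 := sub_nonneg.2 h1
  have hc2n : 0 ≤ c2 := sub_nonneg.2 h2
  have hv1 : volume (Icc a1 b1) = ENNReal.ofReal c1 := Real.volume_Icc
  have hv2 : volume (Icc a2 b2) = ENNReal.ofReal c2 := Real.volume_Icc
  have hsum : Icc a1 b1 + Icc a2 b2 = Icc (a1 + a2) (b1 + b2) := Icc_add_Icc h1 h2
  -- Volume of E₃' equals volume of E₃
  have hE3' : volume ((Icc a1 b1 + Icc a2 b2) ∪ A) = volume E3 := by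
    rw [measure_union hAdisj.symm hAm, hsum, Real.volume_Icc, hAvol, hv1, hv2]
    have h12 : ENNReal.ofReal c1 + ENNReal.ofReal c2 ≤ volume E3 := by
      rw [hv1, hv2] at hbig; exact hbig.le
    rw [tsub_tsub, show (b1 + b2 - (a1 + a2)) = c1 + c2 by ring,
      ENNReal.ofReal_add hc1n hc2n]
    exact add_tsub_cancel_of_le h12
  have hm : (volume E3).toReal = (volume E3).toReal := rfl
  set m : ℝ := (volume E3).toReal with hmdef
  have hcm : c1 + c2 ≤ m := by
    have : (ENNReal.ofReal (c1 + c2)).toReal ≤ m := by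
      apply ENNReal.toReal_mono hE3fin.ne
      rw [ENNReal.ofReal_add hc1n hc2n, ← hv1, ← hv2]
      exact hbig.le
    rwa [ENNReal.toReal_ofReal (by positivity)] at this
  -- LHS set is a full rectangle
  have hL : {p : ℝ × ℝ | p.1 ∈ Icc a1 b1 ∧ p.2 ∈ Icc a2 b2 ∧
      p.1 + p.2 ∈ (Icc a1 b1 + Icc a2 b2) ∪ A} = Icc a1 b1 ×ˢ Icc a2 b2 := by
    ext p
    simp only [mem_setOf_eq, mem_prod]
    refine ⟨fun h => ⟨h.1, h.2.1⟩, fun h => ⟨h.1, h.2, Or.inl (add_mem_add h.1 h.2)⟩⟩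
  -- symInt values
  have hs1 : symInt (Icc a1 b1) = Icc (-c1 / 2) (c1 / 2) := by
    rw [symInt, hv1, ENNReal.toReal_ofReal hc1n]
  have hs2 : symInt (Icc a2 b2) = Icc (-c2 / 2) (c2 / 2) := by
    rw [symInt, hv2, ENNReal.toReal_ofReal hc2n]
  have hs3 : symInt ((Icc a1 b1 + Icc a2 b2) ∪ A) = Icc (-m / 2) (m / 2) := by
    rw [symInt, hE3']
  -- RHS set is a full rectangle
  have hR : {p : ℝ × ℝ | p.1 ∈ symInt (Icc a1 b1) ∧ p.2 ∈ symInt (Icc a2 b2) ∧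
      p.1 + p.2 ∈ symInt ((Icc a1 b1 + Icc a2 b2) ∪ A)} =
      Icc (-c1 / 2) (c1 / 2) ×ˢ Icc (-c2 / 2) (c2 / 2) := by
    rw [hs1, hs2, hs3]
    ext p
    simp only [mem_setOf_eq, mem_prod, mem_Icc]
    constructor
    · exact fun h => ⟨h.1, h.2.1⟩
    · rintro ⟨⟨hx1, hx2⟩, hy1, hy2⟩
      refine ⟨⟨hx1, hx2⟩, ⟨hy1, hy2⟩, ?_, ?_⟩ <;> nlinarith
  rw [hL, hR, Measure.volume_eq_prod, Measure.prod_prod, Measure.prod_prod,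
    Real.volume_Icc, Real.volume_Icc, Real.volume_Icc, Real.volume_Icc,
    show (c1 / 2 - -c1 / 2) = c1 by ring, show (c2 / 2 - -c2 / 2) = c2 by ring]
end

section
/- Let t_1, ..., t_n be pairwise distinct reals (n ≥ 2) and let E_0, ..., E_n ⊂ ℝ be measurable with finite measures, where additionally E_0^* and each E_j^* are the symmetric closed intervals. Suppose for every x ∈ E_0^* the intervals {y : |y + t_j x| ≤ |E_j|/2}, 1 ≤ j ≤ n, truncated by r̄/2 from each side, have a common point. Then I(E_0^*, E_1^*, ..., E_n^*) = r̄ |E_0^*| + I(E_0^*, Ẽ_1^*, ..., Ẽ_n^*), where Ẽ_j^* is the closed interval centered at 0 with |Ẽ_j^*| = |E_j| − r̄, and I(F_0, ..., F_n) = ∫_ℝ 1_{F_0}(x) ∫_ℝ ∏_{j=1}^n 1_{F_j}(y + t_j x) dy dx. -/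
open MeasureTheory Set

lemma sup'_add_const {ι : Type*} (s : Finset ι) (hs : s.Nonempty) (f : ι → ℝ) (a : ℝ) :
    s.sup' hs (fun i => f i + a) = s.sup' hs f + a := by
  apply le_antisymm
  · rw [Finset.sup'_le_iff]
    intro i hi
    exact add_le_add_left (Finset.le_sup' f hi) a
  · rw [← le_sub_iff_add_le, Finset.sup'_le_iff]
    intro i hi
    rw [le_sub_iff_add_le]
    exact Finset.le_sup' (fun i => f i + a) hi

lemma inf'_add_const {ι : Type*} (s : Finset ι) (hs : s.Nonempty) (f : ι → ℝ) (a : ℝ) :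
    s.inf' hs (fun i => f i + a) = s.inf' hs f + a := by
  apply le_antisymm
  · obtain ⟨i, hi, hfi⟩ := Finset.exists_mem_eq_inf' hs f
    rw [hfi]
    exact Finset.inf'_le (fun i => f i + a) hi
  · rw [Finset.le_inf'_iff]
    intro i hi
    exact add_le_add_left (Finset.inf'_le f hi) a

lemma fiber_set (n : ℕ) (hne : (Finset.univ : Finset (Fin n)).Nonempty)
    (l u : Fin n → ℝ) :
    {y : ℝ | ∀ j, l j ≤ y ∧ y ≤ u j} =
      Icc (Finset.univ.sup' hne l) (Finset.univ.inf' hne u) := by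
  ext y
  simp only [mem_setOf_eq, mem_Icc, Finset.sup'_le_iff, Finset.le_inf'_iff, forall_and]
  constructor
  · rintro ⟨h1, h2⟩; exact ⟨fun i _ => h1 i, fun i _ => h2 i⟩
  · rintro ⟨h1, h2⟩; exact ⟨fun i => h1 i (Finset.mem_univ i), fun i => h2 i (Finset.mem_univ i)⟩

lemma meas_prod_set (n : ℕ) (t : Fin n → ℝ) (A : Set ℝ) (hA : MeasurableSet A)
    (c : Fin n → ℝ) :
    MeasurableSet {p : ℝ × ℝ | p.1 ∈ A ∧ ∀ j, p.2 + t j * p.1 ∈ Icc (-(c j)) (c j)} := by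
  have : {p : ℝ × ℝ | p.1 ∈ A ∧ ∀ j, p.2 + t j * p.1 ∈ Icc (-(c j)) (c j)} =
      (Prod.fst ⁻¹' A) ∩ ⋂ j, (fun p : ℝ × ℝ => p.2 + t j * p.1) ⁻¹' Icc (-(c j)) (c j) := by
    ext p; simp [mem_iInter]
  rw [this]
  exact (measurable_fst hA).inter <| MeasurableSet.iInter fun j =>
    (measurable_snd.add (measurable_fst.const_mul (t j))) measurableSet_Icc

/-- Volume of the product set via Fubini. -/
lemma vol_prod_set (n : ℕ) (hne : (Finset.univ : Finset (Fin n)).Nonempty)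
    (t : Fin n → ℝ) (A : Set ℝ) (hA : MeasurableSet A) (c : Fin n → ℝ) :
    volume {p : ℝ × ℝ | p.1 ∈ A ∧ ∀ j, p.2 + t j * p.1 ∈ Icc (-(c j)) (c j)} =
      ∫⁻ x in A, ENNReal.ofReal
        (Finset.univ.inf' hne (fun j => c j - t j * x) -
          Finset.univ.sup' hne (fun j => -(c j) - t j * x)) := by
  have hS := meas_prod_set n t A hA c
  rw [MeasureTheory.Measure.volume_eq_prod, Measure.prod_apply hS, ← lintegral_indicator hA]
  congr 1 with x
  by_cases hx : x ∈ A
  · have hpre : Prod.mk x ⁻¹'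
        {p : ℝ × ℝ | p.1 ∈ A ∧ ∀ j, p.2 + t j * p.1 ∈ Icc (-(c j)) (c j)} =
        Icc (Finset.univ.sup' hne (fun j => -(c j) - t j * x))
          (Finset.univ.inf' hne (fun j => c j - t j * x)) := by
      rw [← fiber_set n hne]
      ext y
      simp only [mem_preimage, mem_setOf_eq, mem_Icc]
      constructor
      · rintro ⟨-, h⟩ j
        obtain ⟨h1, h2⟩ := h j
        constructor <;> linarith
      · intro h
        refine ⟨hx, fun j => ?_⟩
        obtain ⟨h1, h2⟩ := h j
        constructor <;> linarith
    rw [hpre, indicator_of_mem hx, Real.volume_Icc]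
  · have hpre : Prod.mk x ⁻¹'
        {p : ℝ × ℝ | p.1 ∈ A ∧ ∀ j, p.2 + t j * p.1 ∈ Icc (-(c j)) (c j)} = ∅ := by
      ext y; simp [hx]
    rw [hpre, indicator_of_notMem hx, measure_empty]

/-- Exact truncation identity for symmetrized sets: if for every `x ∈ E₀^*` the symmetrically
truncated fiber intervals have a common point, then
`I(E₀^*, E₁^*, …, Eₙ^*) = r̄ |E₀^*| + I(E₀^*, Ẽ₁^*, …, Ẽₙ^*)`. -/
theorem stmt17 (n : ℕ) (hn : 2 ≤ n) (t : Fin n → ℝ) (ht : Function.Injective t)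
    (E0 : Set ℝ) (E : Fin n → Set ℝ)
    (hmeas0 : MeasurableSet E0) (hfin0 : volume E0 < ⊤)
    (hmeas : ∀ j, MeasurableSet (E j)) (hfin : ∀ j, volume (E j) < ⊤)
    (r : ℝ) (hr : 0 ≤ r) (hrle : ∀ j, r ≤ (volume (E j)).toReal)
    (hne : ∀ x ∈ symInt E0,
      (⋂ j, {y : ℝ | |y + t j * x| ≤ ((volume (E j)).toReal - r) / 2}).Nonempty) :
    volume {p : ℝ × ℝ | p.1 ∈ symInt E0 ∧ ∀ j, p.2 + t j * p.1 ∈ symInt (E j)} =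
      ENNReal.ofReal r * volume (symInt E0) +
        volume {p : ℝ × ℝ | p.1 ∈ symInt E0 ∧ ∀ j, p.2 + t j * p.1 ∈
          Icc (-(((volume (E j)).toReal - r) / 2)) (((volume (E j)).toReal - r) / 2)} := by
  haveI : NeZero n := ⟨by omega⟩
  have hneF : (Finset.univ : Finset (Fin n)).Nonempty := Finset.univ_nonempty
  set A := symInt E0 with hA
  have hAmeas : MeasurableSet A := measurableSet_Icc
  set m : Fin n → ℝ := fun j => (volume (E j)).toReal with hm
  have hsym : ∀ j, symInt (E j) = Icc (-(m j / 2)) (m j / 2) := by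
    intro j; simp [symInt, neg_div, hm]
  set L : ℝ → ℝ := fun x => Finset.univ.sup' hneF (fun j => -(m j / 2) - t j * x) with hL
  set U : ℝ → ℝ := fun x => Finset.univ.inf' hneF (fun j => m j / 2 - t j * x) with hU
  -- rewrite both volumes via Fubini
  have v1 : volume {p : ℝ × ℝ | p.1 ∈ symInt E0 ∧ ∀ j, p.2 + t j * p.1 ∈ symInt (E j)} =
      ∫⁻ x in A, ENNReal.ofReal (U x - L x) := by
    simp_rw [hsym]
    exact vol_prod_set n hneF t A hAmeas (fun j => m j / 2)
  have v2 : volume {p : ℝ × ℝ | p.1 ∈ symInt E0 ∧ ∀ j, p.2 + t j * p.1 ∈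
        Icc (-(((volume (E j)).toReal - r) / 2)) (((volume (E j)).toReal - r) / 2)} =
      ∫⁻ x in A, ENNReal.ofReal (U x - L x - r) := by
    rw [vol_prod_set n hneF t A hAmeas (fun j => (m j - r) / 2)]
    congr 1 with x
    have e1 : Finset.univ.sup' hneF (fun j => -((m j - r) / 2) - t j * x) = L x + r / 2 := by
      rw [hL, ← sup'_add_const]
      congr 1 with j; ring
    have e2 : Finset.univ.inf' hneF (fun j => (m j - r) / 2 - t j * x) = U x + -(r / 2) := by
      rw [hU, ← inf'_add_const]
      congr 1 with j; ring
    rw [e1, e2]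
    ring_nf
  rw [v1, v2]
  -- key inequality from nonemptiness
  have key : ∀ x ∈ A, L x + r ≤ U x := by
    intro x hx
    obtain ⟨y, hy⟩ := hne x hx
    simp only [mem_iInter, mem_setOf_eq, abs_le] at hy
    have h1 : L x ≤ y - r / 2 := by
      rw [hL, Finset.sup'_le_iff]
      intro j _
      have := (hy j).1
      have hmr : (volume (E j)).toReal = m j := rfl
      rw [hmr] at this
      linarith
    have h2 : y + r / 2 ≤ U x := by
      rw [hU, Finset.le_inf'_iff]
      intro j _
      have := (hy j).2
      have hmr : (volume (E j)).toReal = m j := rfl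
      rw [hmr] at this
      linarith
    linarith
  have hcong : ∀ᵐ x ∂volume, x ∈ A →
      ENNReal.ofReal (U x - L x) =
        ENNReal.ofReal r + ENNReal.ofReal (U x - L x - r) := by
    refine ae_of_all _ fun x hx => ?_
    rw [← ENNReal.ofReal_add hr (by have := key x hx; linarith)]
    congr 1; ring
  rw [setLIntegral_congr_fun_ae hAmeas hcong, lintegral_add_left measurable_const,
    setLIntegral_const]
end

section
/- Let n ≥ 2, t_1, ..., t_n pairwise distinct reals, and E_0, ..., E_n ⊂ ℝ measurable sets with 0 < |E_j| < ∞. For r ∈ (0, min_{j≥1}|E_j|), let Ẽ_j = E_j(r/2, r/2) be the symmetric truncation for j ≥ 1 and Ẽ_0 = E_0. Suppose that for each x ∈ E_0 the sets E_j − t_j x := {y : y + t_j x ∈ E_j} satisfy ⋂_{j=1}^n (Ẽ_j − t_j x) ≠ ∅. Then I(E_0, E_1, ..., E_n) ≤ r|E_0| + I(E_0, Ẽ_1, ..., Ẽ_n), where I(F_0, ..., F_n) = ∫_ℝ 1_{F_0}(x) ∫_ℝ ∏_{j=1}^n 1_{F_j}(y + t_j x) dy dx. -/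
open MeasureTheory Set

/-- Truncation inequality integrated in `x`: with `Ẽ_j = E_j(r/2, r/2)` the symmetric
truncations, if for each `x ∈ E₀` the truncated fiber sets have a common point, then
`I(E₀, E₁, …, Eₙ) ≤ r |E₀| + I(E₀, Ẽ₁, …, Ẽₙ)`. -/
theorem stmt18 (n : ℕ) (hn : 2 ≤ n) (t : Fin n → ℝ) (ht : Function.Injective t)
    (E0 : Set ℝ) (E : Fin n → Set ℝ)
    (hmeas0 : MeasurableSet E0) (hpos0 : 0 < volume E0) (hfin0 : volume E0 < ⊤)
    (hmeas : ∀ j, MeasurableSet (E j)) (hpos : ∀ j, 0 < volume (E j))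
    (hfin : ∀ j, volume (E j) < ⊤)
    (r : ℝ) (hr : 0 < r) (hrlt : ∀ j, r < (volume (E j)).toReal)
    (a b : Fin n → ℝ)
    (ha : ∀ j, IsLeast {s : ℝ | volume (E j ∩ Iic s) = ENNReal.ofReal (r / 2)} (a j))
    (hb : ∀ j, IsGreatest {s : ℝ | volume (E j ∩ Ici s) = ENNReal.ofReal (r / 2)} (b j))
    (hne : ∀ x ∈ E0, (⋂ j, {y : ℝ | y + t j * x ∈ E j ∩ Icc (a j) (b j)}).Nonempty) :
    volume {p : ℝ × ℝ | p.1 ∈ E0 ∧ ∀ j, p.2 + t j * p.1 ∈ E j} ≤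
      ENNReal.ofReal r * volume E0 +
        volume {p : ℝ × ℝ | p.1 ∈ E0 ∧ ∀ j, p.2 + t j * p.1 ∈ E j ∩ Icc (a j) (b j)} := by
  classical
  haveI : Nonempty (Fin n) := ⟨⟨0, by omega⟩⟩
  -- measurability of the two product sets
  have hmj : ∀ j, MeasurableSet (E j ∩ Icc (a j) (b j)) :=
    fun j => (hmeas j).inter measurableSet_Icc
  have key : ∀ (F : Fin n → Set ℝ), (∀ j, MeasurableSet (F j)) →
      MeasurableSet {p : ℝ × ℝ | p.1 ∈ E0 ∧ ∀ j, p.2 + t j * p.1 ∈ F j} := by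
    intro F hF
    have : {p : ℝ × ℝ | p.1 ∈ E0 ∧ ∀ j, p.2 + t j * p.1 ∈ F j} =
        (Prod.fst ⁻¹' E0) ∩ ⋂ j, (fun p : ℝ × ℝ => p.2 + t j * p.1) ⁻¹' F j := by
      ext p; simp [Set.mem_iInter]
    rw [this]
    exact (measurable_fst hmeas0).inter <| MeasurableSet.iInter fun j =>
      (measurable_snd.add (measurable_fst.const_mul (t j))) (hF j)
  have hSm := key E hmeas
  have hTm := key _ hmj
  -- fiberwise inequality
  have fiber : ∀ x ∈ E0,
      volume {y : ℝ | ∀ j, y + t j * x ∈ E j} ≤ ENNReal.ofReal r +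
        volume {y : ℝ | ∀ j, y + t j * x ∈ E j ∩ Icc (a j) (b j)} := by
    intro x hx
    obtain ⟨y0, hy0⟩ := hne x hx
    simp only [Set.mem_iInter, Set.mem_setOf_eq] at hy0
    obtain ⟨j0, hj0⟩ := Finite.exists_max (fun j => a j - t j * x)
    obtain ⟨j1, hj1⟩ := Finite.exists_max (fun j => -(b j - t j * x))
    have hsub : {y : ℝ | ∀ j, y + t j * x ∈ E j} ⊆
        ({y : ℝ | ∀ j, y + t j * x ∈ E j ∩ Icc (a j) (b j)} ∪
          (fun y : ℝ => y + t j0 * x) ⁻¹' (E j0 ∩ Iio (a j0))) ∪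
          (fun y : ℝ => y + t j1 * x) ⁻¹' (E j1 ∩ Ioi (b j1)) := by
      intro y hy
      by_cases h : ∀ j, y + t j * x ∈ Icc (a j) (b j)
      · exact Or.inl (Or.inl fun j => ⟨hy j, h j⟩)
      · push_neg at h
        obtain ⟨j, hj⟩ := h
        rw [Set.mem_Icc, not_and_or, not_le, not_le] at hj
        rcases hj with hlt | hgt
        · refine Or.inl (Or.inr ⟨hy j0, ?_⟩)
          have h1 : y < a j - t j * x := by linarith
          have h2 : a j - t j * x ≤ a j0 - t j0 * x := hj0 j
          simp only [Set.mem_Iio]; linarith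
        · refine Or.inr ⟨hy j1, ?_⟩
          have h1 : b j - t j * x < y := by linarith
          have h2 : -(b j - t j * x) ≤ -(b j1 - t j1 * x) := hj1 j
          simp only [Set.mem_Ioi]; linarith
    calc volume {y : ℝ | ∀ j, y + t j * x ∈ E j}
        ≤ volume (({y : ℝ | ∀ j, y + t j * x ∈ E j ∩ Icc (a j) (b j)} ∪
            (fun y : ℝ => y + t j0 * x) ⁻¹' (E j0 ∩ Iio (a j0))) ∪
            (fun y : ℝ => y + t j1 * x) ⁻¹' (E j1 ∩ Ioi (b j1))) := measure_mono hsub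
      _ ≤ (volume {y : ℝ | ∀ j, y + t j * x ∈ E j ∩ Icc (a j) (b j)} +
            volume ((fun y : ℝ => y + t j0 * x) ⁻¹' (E j0 ∩ Iio (a j0)))) +
            volume ((fun y : ℝ => y + t j1 * x) ⁻¹' (E j1 ∩ Ioi (b j1))) :=
          le_trans (measure_union_le _ _) (add_le_add_left (measure_union_le _ _) _)
      _ ≤ (volume {y : ℝ | ∀ j, y + t j * x ∈ E j ∩ Icc (a j) (b j)} +
            ENNReal.ofReal (r / 2)) + ENNReal.ofReal (r / 2) := by
          gcongr
          · rw [measure_preimage_add_right, ← (ha j0).1]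
            exact measure_mono (Set.inter_subset_inter_right _ Iio_subset_Iic_self)
          · rw [measure_preimage_add_right, ← (hb j1).1]
            exact measure_mono (Set.inter_subset_inter_right _ Ioi_subset_Ici_self)
      _ = ENNReal.ofReal r + volume {y : ℝ | ∀ j, y + t j * x ∈ E j ∩ Icc (a j) (b j)} := by
          rw [add_assoc, ← ENNReal.ofReal_add (by linarith) (by linarith)]
          rw [add_comm]
          norm_num
  -- integrate
  rw [Measure.volume_eq_prod, Measure.prod_apply hSm, Measure.prod_apply hTm]
  have hfib : ∀ (F : Fin n → Set ℝ) (x : ℝ),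
      Prod.mk x ⁻¹' {p : ℝ × ℝ | p.1 ∈ E0 ∧ ∀ j, p.2 + t j * p.1 ∈ F j} =
        if x ∈ E0 then {y : ℝ | ∀ j, y + t j * x ∈ F j} else ∅ := by
    intro F x
    by_cases hx : x ∈ E0 <;> simp [hx, Set.preimage, Set.eq_empty_iff_forall_notMem]
  calc ∫⁻ x, volume (Prod.mk x ⁻¹' {p : ℝ × ℝ | p.1 ∈ E0 ∧ ∀ j, p.2 + t j * p.1 ∈ E j})
      ≤ ∫⁻ x, (E0.indicator (fun _ => ENNReal.ofReal r) x +
          volume (Prod.mk x ⁻¹' {p : ℝ × ℝ | p.1 ∈ E0 ∧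
            ∀ j, p.2 + t j * p.1 ∈ E j ∩ Icc (a j) (b j)})) := by
        apply lintegral_mono
        intro x
        dsimp only
        rw [hfib E x, hfib _ x]
        by_cases hx : x ∈ E0
        · simp only [hx, if_pos, Set.indicator_of_mem hx]
          exact fiber x hx
        · simp [hx]
    _ = ENNReal.ofReal r * volume E0 +
          ∫⁻ x, volume (Prod.mk x ⁻¹' {p : ℝ × ℝ | p.1 ∈ E0 ∧
            ∀ j, p.2 + t j * p.1 ∈ E j ∩ Icc (a j) (b j)}) := by
        rw [lintegral_add_left (measurable_const.indicator hmeas0),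
          lintegral_indicator_const hmeas0]
end
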